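/- arXiv:2408.12541 — 4 statements merged into one kernel-verified Lean document; each statement's English description precedes it below -/
import Mathlib

section
/- Let $\rho_1,\dots,\rho_K \ge 0$ with $\sum_k \rho_k = 1$, and for each $k$ let $\delta_k = p_{1k} - p_{0k}$ and $H_k = \pi_0(1/2 - p_{1k}) + \pi_1(p_{0k} - 1/2)$ where $\pi_0 = \pi_1 = 1/2$. Then $-\sum_{1 \le i < j \le K} \rho_i \rho_j (\delta_i - \delta_j)(H_i - H_j) = \frac{1}{2}\sum_{1 \le i < j \le K} \rho_i \rho_j (\delta_i - \delta_j)^2 \ge 0$. -/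
open Finset

theorem sato_conservative_balanced (K : ℕ) (ρ p1 p0 : ℕ → ℝ)
    (hρ : ∀ k, 0 ≤ ρ k) (hsum : ∑ k ∈ Finset.range K, ρ k = 1)
    (hp1 : ∀ k, p1 k ∈ Set.Icc (0 : ℝ) 1) (hp0 : ∀ k, p0 k ∈ Set.Icc (0 : ℝ) 1)
    (δ H : ℕ → ℝ)
    (hδ : ∀ k, δ k = p1 k - p0 k)
    (hH : ∀ k, H k = (1/2) * (1/2 - p1 k) + (1/2) * (p0 k - 1/2)) :
    (-∑ i ∈ Finset.range K, ∑ j ∈ Finset.range K,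
        (if i < j then ρ i * ρ j * (δ i - δ j) * (H i - H j) else 0)
      = (1/2) * ∑ i ∈ Finset.range K, ∑ j ∈ Finset.range K,
          (if i < j then ρ i * ρ j * (δ i - δ j) ^ 2 else 0))
    ∧ 0 ≤ (1/2) * ∑ i ∈ Finset.range K, ∑ j ∈ Finset.range K,
          (if i < j then ρ i * ρ j * (δ i - δ j) ^ 2 else 0) := by
  have key : ∀ i j : ℕ, (if i < j then ρ i * ρ j * (δ i - δ j) * (H i - H j) else 0)
      = -(1/2) * (if i < j then ρ i * ρ j * (δ i - δ j) ^ 2 else 0) := by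
    intro i j
    by_cases h : i < j
    · simp only [h, if_pos, hδ, hH]; ring
    · simp [h]
  constructor
  · simp only [key, ← Finset.mul_sum]
    ring
  · apply mul_nonneg (by norm_num)
    apply Finset.sum_nonneg
    intro i _
    apply Finset.sum_nonneg
    intro j _
    by_cases h : i < j
    · simp only [h, if_pos]
      exact mul_nonneg (mul_nonneg (hρ i) (hρ j)) (sq_nonneg _)
    · simp [h]
end

section
/- Let $n \ge 1$, $\pi_1 \in [0,1]$, $\pi_0 = 1-\pi_1$, and $X \sim \mathrm{Binomial}(n, \pi_1)$. Define $W = X(n-X)/n$. Then $\mathrm{var}(W) = \pi_1\pi_0 \frac{n-1}{n}\{n - 1 - (4n-6)\pi_1\pi_0\}$. -/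
open Finset

lemma d2_cast (k : ℕ) : ((k.descFactorial 2 : ℕ) : ℝ) = (k:ℝ)^2 - k := by
  rcases k with _|m
  · simp
  · simp [Nat.descFactorial]; push_cast; ring

lemma d3_cast (k : ℕ) : ((k.descFactorial 3 : ℕ) : ℝ)
    = (k:ℝ)^3 - 3*(k:ℝ)^2 + 2*k := by
  rcases k with _|_|m
  · simp
  · norm_num [Nat.descFactorial]
  · simp [Nat.descFactorial]; push_cast; ring

lemma d4_cast (k : ℕ) : ((k.descFactorial 4 : ℕ) : ℝ)
    = (k:ℝ)^4 - 6*(k:ℝ)^3 + 11*(k:ℝ)^2 - 6*k := by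
  rcases k with _|_|_|m
  · simp
  · norm_num [Nat.descFactorial]
  · norm_num [Nat.descFactorial]
  · simp [Nat.descFactorial]; push_cast; ring

lemma nat_key (n r j : ℕ) (h : r + j ≤ n) :
    n.choose (r+j) * (r+j).descFactorial r = n.descFactorial r * (n-r).choose j := by
  rw [Nat.descFactorial_eq_factorial_mul_choose, Nat.descFactorial_eq_factorial_mul_choose]
  have h2 := Nat.choose_mul (n := n) (Nat.le_add_right r j)
  rw [show r + j - r = j from by omega] at h2
  calc n.choose (r+j) * (Nat.factorial r * (r+j).choose r)
      = Nat.factorial r * (n.choose (r+j) * (r+j).choose r) := by ring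
    _ = Nat.factorial r * (n.choose r * (n-r).choose j) := by rw [h2]
    _ = Nat.factorial r * n.choose r * (n-r).choose j := by ring

lemma binom_descFactorial_sum (n r : ℕ) (p q : ℝ) :
    ∑ k ∈ Finset.range (n+1),
        (n.choose k : ℝ) * p^k * q^(n-k) * ((k.descFactorial r : ℕ) : ℝ)
      = ((n.descFactorial r : ℕ) : ℝ) * p^r * (p+q)^(n-r) := by
  rcases le_or_gt r n with h | h
  · rw [Finset.range_eq_Ico,
      ← Finset.sum_Ico_consecutive _ (Nat.zero_le r) (by omega : r ≤ n+1)]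
    have h1 : ∑ k ∈ Finset.Ico 0 r,
        (n.choose k : ℝ) * p^k * q^(n-k) * ((k.descFactorial r : ℕ) : ℝ) = 0 := by
      apply Finset.sum_eq_zero
      intro k hk
      have hk' : k < r := (Finset.mem_Ico.mp hk).2
      rw [Nat.descFactorial_eq_zero_iff_lt.mpr hk']
      simp
    rw [h1, zero_add, Finset.sum_Ico_eq_sum_range,
      show n + 1 - r = (n - r) + 1 from by omega]
    have key : ∀ j ∈ Finset.range (n - r + 1),
        (n.choose (r+j) : ℝ) * p^(r+j) * q^(n-(r+j)) * (((r+j).descFactorial r : ℕ) : ℝ)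
          = ((n.descFactorial r : ℕ) : ℝ) * p^r
            * (p^j * q^((n-r)-j) * ((n-r).choose j : ℝ)) := by
      intro j hj
      have hj' : r + j ≤ n := by
        have := Finset.mem_range.mp hj; omega
      have hk := nat_key n r j hj'
      have hc : (n.choose (r+j) : ℝ) * (((r+j).descFactorial r : ℕ) : ℝ)
          = ((n.descFactorial r : ℕ) : ℝ) * ((n-r).choose j : ℝ) := by
        exact_mod_cast congrArg (Nat.cast (R := ℝ)) hk
      have hq : n - (r+j) = (n-r) - j := by omega
      rw [hq, pow_add]
      calc (n.choose (r+j) : ℝ) * (p^r * p^j) * q^((n-r)-j) * (((r+j).descFactorial r : ℕ) : ℝ)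
          = ((n.choose (r+j) : ℝ) * (((r+j).descFactorial r : ℕ) : ℝ))
              * (p^r * p^j * q^((n-r)-j)) := by ring
        _ = (((n.descFactorial r : ℕ) : ℝ) * ((n-r).choose j : ℝ))
              * (p^r * p^j * q^((n-r)-j)) := by rw [hc]
        _ = ((n.descFactorial r : ℕ) : ℝ) * p^r
              * (p^j * q^((n-r)-j) * ((n-r).choose j : ℝ)) := by ring
    rw [Finset.sum_congr rfl key, ← Finset.mul_sum, add_pow]
  · have h1 : ∑ k ∈ Finset.range (n+1),
        (n.choose k : ℝ) * p^k * q^(n-k) * ((k.descFactorial r : ℕ) : ℝ) = 0 := by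
      apply Finset.sum_eq_zero
      intro k hk
      have hk' : k < r := by have := Finset.mem_range.mp hk; omega
      rw [Nat.descFactorial_eq_zero_iff_lt.mpr hk']
      simp
    rw [h1, Nat.descFactorial_eq_zero_iff_lt.mpr h]
    simp

theorem mh_weight_variance (n : ℕ) (hn : 1 ≤ n) (π₁ π₀ : ℝ)
    (h0 : 0 ≤ π₁) (h1 : π₁ ≤ 1) (hπ₀ : π₀ = 1 - π₁) :
    (∑ k ∈ Finset.range (n + 1),
        (n.choose k : ℝ) * π₁ ^ k * (1 - π₁) ^ (n - k)
          * ((k : ℝ) * ((n : ℝ) - (k : ℝ)) / (n : ℝ)) ^ 2)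
    - (∑ k ∈ Finset.range (n + 1),
        (n.choose k : ℝ) * π₁ ^ k * (1 - π₁) ^ (n - k)
          * ((k : ℝ) * ((n : ℝ) - (k : ℝ)) / (n : ℝ))) ^ 2
    = π₁ * π₀ * (((n : ℝ) - 1) / (n : ℝ))
        * ((n : ℝ) - 1 - (4 * (n : ℝ) - 6) * π₁ * π₀) := by
  have hn0 : (n:ℝ) ≠ 0 := by
    have : (0:ℝ) < n := by exact_mod_cast hn
    linarith
  set f : ℕ → ℝ := fun k => (n.choose k : ℝ) * π₁ ^ k * (1 - π₁) ^ (n - k) with hf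
  have hpq : π₁ + (1 - π₁) = 1 := by ring
  have base : ∀ r : ℕ, ∑ k ∈ Finset.range (n+1), f k * ((k.descFactorial r : ℕ) : ℝ)
      = ((n.descFactorial r : ℕ) : ℝ) * π₁ ^ r := by
    intro r
    have := binom_descFactorial_sum n r π₁ (1 - π₁)
    rw [hpq, one_pow, mul_one] at this
    exact this
  have M1 : ∑ k ∈ Finset.range (n+1), f k * (k:ℝ) = (n:ℝ) * π₁ := by
    have := base 1
    simpa using this
  have M2 : ∑ k ∈ Finset.range (n+1), f k * ((k:ℝ)^2 - k) = ((n:ℝ)^2 - n) * π₁^2 := by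
    have h := base 2
    rw [d2_cast n] at h
    rw [← h]
    exact Finset.sum_congr rfl fun k _ => by rw [d2_cast k]
  have M3 : ∑ k ∈ Finset.range (n+1), f k * ((k:ℝ)^3 - 3*(k:ℝ)^2 + 2*k)
      = ((n:ℝ)^3 - 3*(n:ℝ)^2 + 2*n) * π₁^3 := by
    have h := base 3
    rw [d3_cast n] at h
    rw [← h]
    exact Finset.sum_congr rfl fun k _ => by rw [d3_cast k]
  have M4 : ∑ k ∈ Finset.range (n+1), f k * ((k:ℝ)^4 - 6*(k:ℝ)^3 + 11*(k:ℝ)^2 - 6*k)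
      = ((n:ℝ)^4 - 6*(n:ℝ)^3 + 11*(n:ℝ)^2 - 6*n) * π₁^4 := by
    have h := base 4
    rw [d4_cast n] at h
    rw [← h]
    exact Finset.sum_congr rfl fun k _ => by rw [d4_cast k]
  have hS1 : ∑ k ∈ Finset.range (n+1),
      f k * ((k : ℝ) * ((n : ℝ) - (k : ℝ)) / (n : ℝ))
      = ((n:ℝ)-1) * π₁ * (1 - π₁) := by
    have step : ∑ k ∈ Finset.range (n+1),
        f k * ((k : ℝ) * ((n : ℝ) - (k : ℝ)) / (n : ℝ))
        = ∑ k ∈ Finset.range (n+1),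
          (((n:ℝ)-1)/n * (f k * (k:ℝ)) - (1/n) * (f k * ((k:ℝ)^2 - k))) := by
      apply Finset.sum_congr rfl
      intro k _
      field_simp
      ring
    rw [step, Finset.sum_sub_distrib, ← Finset.mul_sum, ← Finset.mul_sum, M1, M2]
    field_simp
  have hS2 : ∑ k ∈ Finset.range (n+1),
      f k * ((k : ℝ) * ((n : ℝ) - (k : ℝ)) / (n : ℝ)) ^ 2
      = ((((n:ℝ)-1)^2 * ((n:ℝ) * π₁)
          + ((n:ℝ)^2 - 6*n + 7) * (((n:ℝ)^2 - n) * π₁^2)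
          + (6 - 2*(n:ℝ)) * (((n:ℝ)^3 - 3*(n:ℝ)^2 + 2*n) * π₁^3)
          + ((n:ℝ)^4 - 6*(n:ℝ)^3 + 11*(n:ℝ)^2 - 6*n) * π₁^4) / (n:ℝ)^2) := by
    have step : ∑ k ∈ Finset.range (n+1),
        f k * ((k : ℝ) * ((n : ℝ) - (k : ℝ)) / (n : ℝ)) ^ 2
        = ∑ k ∈ Finset.range (n+1),
          ((((n:ℝ)-1)^2/(n:ℝ)^2 * (f k * (k:ℝ))
            + ((n:ℝ)^2 - 6*n + 7)/(n:ℝ)^2 * (f k * ((k:ℝ)^2 - k)))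
            + ((6 - 2*(n:ℝ))/(n:ℝ)^2 * (f k * ((k:ℝ)^3 - 3*(k:ℝ)^2 + 2*k))
            + 1/(n:ℝ)^2 * (f k * ((k:ℝ)^4 - 6*(k:ℝ)^3 + 11*(k:ℝ)^2 - 6*k)))) := by
      apply Finset.sum_congr rfl
      intro k _
      field_simp
      ring
    rw [step, Finset.sum_add_distrib, Finset.sum_add_distrib, Finset.sum_add_distrib,
      ← Finset.mul_sum, ← Finset.mul_sum, ← Finset.mul_sum, ← Finset.mul_sum,
      M1, M2, M3, M4]
    field_simp
    ring
  rw [hπ₀]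
  rw [show (∑ k ∈ Finset.range (n + 1),
        (n.choose k : ℝ) * π₁ ^ k * (1 - π₁) ^ (n - k)
          * ((k : ℝ) * ((n : ℝ) - (k : ℝ)) / (n : ℝ)) ^ 2)
      = ∑ k ∈ Finset.range (n+1),
        f k * ((k : ℝ) * ((n : ℝ) - (k : ℝ)) / (n : ℝ)) ^ 2 from rfl]
  rw [show (∑ k ∈ Finset.range (n + 1),
        (n.choose k : ℝ) * π₁ ^ k * (1 - π₁) ^ (n - k)
          * ((k : ℝ) * ((n : ℝ) - (k : ℝ)) / (n : ℝ)))
      = ∑ k ∈ Finset.range (n+1),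
        f k * ((k : ℝ) * ((n : ℝ) - (k : ℝ)) / (n : ℝ)) from rfl]
  rw [hS1, hS2]
  field_simp
  ring
end

section
/- Let $n_{.1k}, n_{.0k} > 0$, $n_{..k} = n_{.1k}+n_{.0k}$, and let $n_{11k}, n_{01k}, n_{10k}, n_{00k} \ge 0$ be integers with $n_{11k}+n_{01k} = n_{.1k}$ and $n_{10k}+n_{00k} = n_{.0k}$. Define $\lambda_k = \frac{n_{.0k}n_{11k}/n_{.1k} - n_{.1k}n_{10k}/n_{.0k}}{n_{.0k} - n_{.1k}}$ (assuming $n_{.0k} \ne n_{.1k}$). Then $\lambda_k (n_{.0k}^2 n_{01k} - n_{.1k}^2 n_{00k}) + (1-\lambda_k)(n_{.1k}^2 n_{10k} - n_{.0k}^2 n_{11k}) = 0$. -/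
theorem gr_lambda_cancellation
    (n11 n01 n10 n00 : ℕ) (N1 N0 : ℝ)
    (hN1 : N1 = (n11 : ℝ) + (n01 : ℝ)) (hN0 : N0 = (n10 : ℝ) + (n00 : ℝ))
    (hN1pos : 0 < N1) (hN0pos : 0 < N0) (hne : N0 ≠ N1)
    (lam : ℝ)
    (hlam : lam = (N0 * (n11 : ℝ) / N1 - N1 * (n10 : ℝ) / N0) / (N0 - N1)) :
    lam * (N0 ^ 2 * (n01 : ℝ) - N1 ^ 2 * (n00 : ℝ))
      + (1 - lam) * (N1 ^ 2 * (n10 : ℝ) - N0 ^ 2 * (n11 : ℝ)) = 0 := by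
  have h1 : N1 ≠ 0 := ne_of_gt hN1pos
  have h0 : N0 ≠ 0 := ne_of_gt hN0pos
  have hd : N0 - N1 ≠ 0 := sub_ne_zero.mpr hne
  have e01 : (n01 : ℝ) = N1 - n11 := by rw [hN1]; ring
  have e00 : (n00 : ℝ) = N0 - n10 := by rw [hN0]; ring
  subst hlam
  rw [e01, e00]
  field_simp
  ring
end

section
/- Let $n_{.1k}, n_{.0k} > 0$, $n_{..k} = n_{.1k}+n_{.0k}$, $n_{11k}+n_{01k}=n_{.1k}$, $n_{10k}+n_{00k}=n_{.0k}$ all nonnegative integers, $n_{.0k} \ne n_{.1k}$, and $\lambda_k = \frac{n_{.0k}n_{11k}/n_{.1k} - n_{.1k}n_{10k}/n_{.0k}}{n_{.0k}-n_{.1k}}$. Then $\lambda_k(n_{.0k}n_{10k}n_{01k} + n_{.1k}n_{11k}n_{00k}) + (1-\lambda_k)(n_{.0k}n_{11k}n_{00k} + n_{.1k}n_{10k}n_{01k}) = \frac{n_{.0k}^3 n_{11k}n_{01k} + n_{.1k}^3 n_{10k}n_{00k}}{n_{.1k}n_{.0k}}$. -/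
theorem gr_lambda_combination
    (n11 n01 n10 n00 : ℕ) (N1 N0 : ℝ)
    (hN1 : N1 = (n11 : ℝ) + (n01 : ℝ)) (hN0 : N0 = (n10 : ℝ) + (n00 : ℝ))
    (hN1pos : 0 < N1) (hN0pos : 0 < N0) (hne : N0 ≠ N1)
    (lam : ℝ)
    (hlam : lam = (N0 * (n11 : ℝ) / N1 - N1 * (n10 : ℝ) / N0) / (N0 - N1)) :
    lam * (N0 * (n10 : ℝ) * (n01 : ℝ) + N1 * (n11 : ℝ) * (n00 : ℝ))
      + (1 - lam) * (N0 * (n11 : ℝ) * (n00 : ℝ) + N1 * (n10 : ℝ) * (n01 : ℝ))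
    = (N0 ^ 3 * (n11 : ℝ) * (n01 : ℝ) + N1 ^ 3 * (n10 : ℝ) * (n00 : ℝ)) / (N1 * N0) := by
  have hd : N0 - N1 ≠ 0 := sub_ne_zero.mpr hne
  subst hlam
  have h01 : (n01 : ℝ) = N1 - n11 := by rw [hN1]; ring
  have h00 : (n00 : ℝ) = N0 - n10 := by rw [hN0]; ring
  rw [h01, h00]
  field_simp
  ring
end
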